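/- Let dλ be a positive measure whose support has finite infimum x_0, let α_k, β_k be its recursion coefficients, and define α_n* = x_0 − β_n π_{n-1}(x_0)/π_n(x_0). Then the (n+1)-point quadrature rule whose nodes are the eigenvalues of the (n+1)×(n+1) tridiagonal matrix with diagonal (α_0,…,α_{n-1}, α_n*) and off-diagonals (√β_1,…,√β_n), and whose weights are β_0 times the squared first components of normalized eigenvectors, has x_0 as a node and is exact for all polynomials of degree ≤ 2n (Gauss–Radau rule). -/

import Mathlib

open Polynomial MeasureTheory

lemma span_aux (π : ℕ → Polynomial ℝ) (hmonic : ∀ k, (π k).Monic)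
    (hdeg : ∀ k, (π k).natDegree = k) (m : ℕ) (r : Polynomial ℝ) (hr : r.natDegree ≤ m) :
    r ∈ Submodule.span ℝ (π '' Set.Iic m) := by
  have H : ∀ d : ℕ, ∀ r : Polynomial ℝ, r.natDegree ≤ d → r.natDegree ≤ m →
      r ∈ Submodule.span ℝ (π '' Set.Iic m) := by
    intro d
    induction d with
    | zero =>
      intro r hrd _
      obtain ⟨c, hc⟩ := Polynomial.natDegree_eq_zero.mp (Nat.le_zero.mp hrd)
      have h0 : π 0 = 1 := (hmonic 0).natDegree_eq_zero.mp (hdeg 0)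
      have hrc : r = c • π 0 := by rw [h0, smul_eq_C_mul, mul_one, hc]
      rw [hrc]
      exact Submodule.smul_mem _ _ (Submodule.subset_span ⟨0, by simp, rfl⟩)
    | succ d ih =>
      intro r hrd hrm
      by_cases hle : r.natDegree ≤ d
      · exact ih r hle hrm
      have hd : r.natDegree = d + 1 := le_antisymm hrd (by omega)
      have hr0 : r ≠ 0 := by intro h; rw [h] at hd; simp at hd
      have hlc : r.leadingCoeff ≠ 0 := leadingCoeff_ne_zero.mpr hr0
      set q : Polynomial ℝ := C r.leadingCoeff * π (d + 1) with hq
      have hπdeg : (π (d+1)).degree = ((d+1 : ℕ) : WithBot ℕ) := by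
        rw [degree_eq_natDegree (hmonic (d+1)).ne_zero, hdeg]
      have hqdeg : r.degree = q.degree := by
        rw [hq, degree_C_mul hlc, hπdeg, degree_eq_natDegree hr0, hd]
      have hqlc : r.leadingCoeff = q.leadingCoeff := by
        rw [hq, leadingCoeff_mul, leadingCoeff_C, (hmonic (d+1)).leadingCoeff, mul_one]
      have hsub : (r - q).degree < r.degree := degree_sub_lt hqdeg hr0 hqlc
      have hsubnat : (r - q).natDegree ≤ d := by
        by_cases h0 : r - q = 0
        · simp [h0]
        · have := natDegree_lt_natDegree h0 hsub
          omega
      have hmem : q ∈ Submodule.span ℝ (π '' Set.Iic m) := by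
        have hqs : q = r.leadingCoeff • π (d+1) := by rw [hq, smul_eq_C_mul]
        rw [hqs]
        exact Submodule.smul_mem _ _
          (Submodule.subset_span ⟨d+1, by simp only [Set.mem_Iic]; omega, rfl⟩)
      have hrr : r = (r - q) + q := by ring
      rw [hrr]
      exact Submodule.add_mem _ (ih _ hsubnat (by omega)) hmem
  exact H m r hr hr

noncomputable def intLmap (μ : Measure ℝ)
    (hint : ∀ p : Polynomial ℝ, Integrable (fun t => p.eval t) μ) :
    Polynomial ℝ →ₗ[ℝ] ℝ where
  toFun p := ∫ t, p.eval t ∂μ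
  map_add' p q := by
    simp only [eval_add]
    exact integral_add (hint p) (hint q)
  map_smul' c p := by
    simp only [eval_smul, smul_eq_mul, RingHom.id_apply]
    rw [← smul_eq_mul, ← integral_smul]
    simp [smul_eq_mul]

noncomputable def sumSmap {N : ℕ} (w x : Fin N → ℝ) : Polynomial ℝ →ₗ[ℝ] ℝ where
  toFun p := ∑ i, w i * p.eval (x i)
  map_add' p q := by
    simp [eval_add, mul_add, Finset.sum_add_distrib]
  map_smul' c p := by
    simp [eval_smul, Finset.mul_sum, smul_eq_mul]
    ring_nf
    simp [mul_assoc, mul_comm, mul_left_comm]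

theorem gauss_radau_quadrature (n : ℕ) (hn : 1 ≤ n)
    (μ : Measure ℝ)
    (hint : ∀ p : Polynomial ℝ, Integrable (fun t => p.eval t) μ)
    (hpos : ∀ p : Polynomial ℝ, p ≠ 0 → 0 < ∫ t, (p.eval t) ^ 2 ∂μ)
    (x0 : ℝ) (hlow : ∀ᵐ t ∂μ, x0 ≤ t)
    (π : ℕ → Polynomial ℝ)
    (hmonic : ∀ k, (π k).Monic)
    (hdeg : ∀ k, (π k).natDegree = k)
    (horth : ∀ k l, k ≠ l → ∫ t, (π k).eval t * (π l).eval t ∂μ = 0)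
    (α β : ℕ → ℝ) (hβpos : ∀ k, 1 ≤ k → 0 < β k)
    (hβ0 : β 0 = ∫ t, (1 : ℝ) ∂μ)
    (hrec0 : π 1 = (X - C (α 0)) * π 0)
    (hrec : ∀ k, 1 ≤ k → π (k + 1) = (X - C (α k)) * π k - C (β k) * π (k - 1))
    (hπn : (π n).eval x0 ≠ 0)
    (αstar : ℝ)
    (hαstar : αstar = x0 - β n * (π (n - 1)).eval x0 / (π n).eval x0)
    (J : Matrix (Fin (n + 1)) (Fin (n + 1)) ℝ)
    (hJ : ∀ i j : Fin (n + 1), J i j =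
      if (i : ℕ) = (j : ℕ) then (if (i : ℕ) < n then α i else αstar)
      else if (i : ℕ) + 1 = (j : ℕ) then Real.sqrt (β ((j : ℕ)))
      else if (j : ℕ) + 1 = (i : ℕ) then Real.sqrt (β ((i : ℕ)))
      else 0)
    (x : Fin (n + 1) → ℝ) (v : Fin (n + 1) → Fin (n + 1) → ℝ)
    (hxs : StrictMono x)
    (heig : ∀ i, J.mulVec (v i) = x i • v i)
    (hnorm : ∀ i, ∑ j, (v i j) ^ 2 = 1)
    (w : Fin (n + 1) → ℝ)
    (hw : ∀ i, w i = β 0 * (v i 0) ^ 2) :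
    (∃ i, x i = x0) ∧
    ∀ f : Polynomial ℝ, f.degree ≤ ((2 * n : ℕ) : WithBot ℕ) →
      ∫ t, f.eval t ∂μ = ∑ i, w i * f.eval (x i) := by
  classical
  have hπ0 : π 0 = 1 := (hmonic 0).natDegree_eq_zero.mp (hdeg 0)
  set V : Fin (n+1) → ℕ → ℝ := fun i c => if h : c < n + 1 then v i ⟨c, h⟩ else 0 with hV
  have hVnat : ∀ (i : Fin (n+1)) (c : ℕ) (h : c < n + 1), V i c = v i ⟨c, h⟩ := by
    intro i c h; simp only [hV]; rw [dif_pos h]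
  have hVv : ∀ (i m : Fin (n+1)), V i (m : ℕ) = v i m := by
    intro i m; simp only [hV]; rw [dif_pos m.isLt]
  have hV0 : ∀ i, V i 0 = v i 0 := fun i => hVv i 0
  have hVbig : ∀ i, V i (n+1) = 0 := by
    intro i; simp only [hV]; rw [dif_neg (by omega)]
  -- row equations of the eigensystem
  have hrow : ∀ (i : Fin (n+1)) (j : ℕ), 1 ≤ j → j ≤ n →
      x i * V i j = Real.sqrt (β j) * V i (j-1)
        + (if j < n then α j else αstar) * V i j
        + Real.sqrt (β (j+1)) * V i (j+1) := by
    intro i j hj1 hjn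
    have hj : j < n + 1 := by omega
    have key := congrFun (heig i) ⟨j, hj⟩
    rw [Matrix.mulVec, dotProduct] at key
    have hpt : ∀ m : Fin (n+1), J ⟨j, hj⟩ m * v i m =
        (fun c : ℕ => (if c = j - 1 then Real.sqrt (β j) * V i c else 0)
          + ((if c = j then (if j < n then α j else αstar) * V i c else 0)
          + (if c = j + 1 then Real.sqrt (β (j+1)) * V i c else 0))) (m : ℕ) := by
      intro m
      rw [hJ]
      simp only [hVv i m]
      rcases Nat.lt_trichotomy (m : ℕ) j with hc | hc | hc
      · have e1 : ¬ ((j : ℕ) = (m : ℕ)) := by omega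
        have e2 : ¬ (j + 1 = (m : ℕ)) := by omega
        have r2 : ¬ ((m : ℕ) = j) := by omega
        have r3 : ¬ ((m : ℕ) = j + 1) := by omega
        by_cases h3 : (m : ℕ) + 1 = j
        · have r1 : (m : ℕ) = j - 1 := by omega
          rw [if_neg e1, if_neg e2, if_pos h3, if_pos r1, if_neg r2, if_neg r3]
          ring
        · have r1 : ¬ ((m : ℕ) = j - 1) := by omega
          rw [if_neg e1, if_neg e2, if_neg h3, if_neg r1, if_neg r2, if_neg r3]
          ring
      · have r1 : ¬ ((m : ℕ) = j - 1) := by omega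
        have r3 : ¬ ((m : ℕ) = j + 1) := by omega
        rw [if_pos hc.symm, if_pos hc, if_neg r1, if_neg r3]
        ring
      · have e1 : ¬ ((j : ℕ) = (m : ℕ)) := by omega
        have e3 : ¬ ((m : ℕ) + 1 = j) := by omega
        have r1 : ¬ ((m : ℕ) = j - 1) := by omega
        have r2 : ¬ ((m : ℕ) = j) := by omega
        by_cases h2 : j + 1 = (m : ℕ)
        · have r3 : (m : ℕ) = j + 1 := by omega
          rw [if_neg e1, if_pos h2, if_neg r1, if_neg r2, if_pos r3, ← h2]
          ring
        · have r3 : ¬ ((m : ℕ) = j + 1) := by omega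
          rw [if_neg e1, if_neg h2, if_neg e3, if_neg r1, if_neg r2, if_neg r3]
          ring
    rw [Finset.sum_congr rfl (fun m _ => hpt m)] at key
    rw [Fin.sum_univ_eq_sum_range (fun c : ℕ => (if c = j - 1 then Real.sqrt (β j) * V i c else 0)
          + ((if c = j then (if j < n then α j else αstar) * V i c else 0)
          + (if c = j + 1 then Real.sqrt (β (j+1)) * V i c else 0))) (n+1)] at key
    simp only [Finset.sum_add_distrib, Finset.sum_ite_eq', Finset.mem_range] at key
    rw [if_pos (by omega : j - 1 < n + 1), if_pos (by omega : j < n + 1)] at key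
    have hlast : (if j + 1 < n + 1 then Real.sqrt (β (j+1)) * V i (j+1) else 0)
        = Real.sqrt (β (j+1)) * V i (j+1) := by
      by_cases h : j + 1 < n + 1
      · rw [if_pos h]
      · rw [if_neg h]
        have hz : V i (j+1) = 0 := by simp only [hV]; rw [dif_neg (by omega)]
        rw [hz, mul_zero]
    rw [hlast] at key
    have hVj : V i j = v i ⟨j, hj⟩ := hVnat i j hj
    rw [Pi.smul_apply, smul_eq_mul, ← hVj] at key
    rw [← key]
    ring
  have hrow0 : ∀ i, x i * V i 0 = α 0 * V i 0 + Real.sqrt (β 1) * V i 1 := by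
    intro i
    have h0 : (0 : ℕ) < n + 1 := by omega
    have key := congrFun (heig i) ⟨0, h0⟩
    rw [Matrix.mulVec, dotProduct] at key
    have hpt : ∀ m : Fin (n+1), J ⟨0, h0⟩ m * v i m =
        (fun c : ℕ => (if c = 0 then α 0 * V i c else 0)
          + (if c = 1 then Real.sqrt (β 1) * V i c else 0)) (m : ℕ) := by
      intro m
      rw [hJ]
      simp only [hVv i m]
      rcases Nat.lt_trichotomy (m : ℕ) 1 with hc | hc | hc
      · have hm0 : (m : ℕ) = 0 := by omega
        rw [if_pos hm0.symm, if_pos hm0, if_neg (by omega : ¬ ((m:ℕ) = 1)),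
          if_pos (by omega : (0:ℕ) < n)]
        ring
      · have e1 : ¬ ((0 : ℕ) = (m : ℕ)) := by omega
        rw [if_neg e1, if_pos (by omega : (0:ℕ) + 1 = (m:ℕ)),
          if_neg (by omega : ¬ ((m:ℕ) = 0)), if_pos hc, hc]
        ring
      · have e1 : ¬ ((0 : ℕ) = (m : ℕ)) := by omega
        have e2 : ¬ ((0 : ℕ) + 1 = (m : ℕ)) := by omega
        have e3 : ¬ ((m : ℕ) + 1 = 0) := by omega
        have r1 : ¬ ((m : ℕ) = 0) := by omega
        have r2 : ¬ ((m : ℕ) = 1) := by omega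
        rw [if_neg e1, if_neg e2, if_neg e3, if_neg r1, if_neg r2]
        ring
    rw [Finset.sum_congr rfl (fun m _ => hpt m)] at key
    rw [Fin.sum_univ_eq_sum_range (fun c : ℕ => (if c = 0 then α 0 * V i c else 0)
          + (if c = 1 then Real.sqrt (β 1) * V i c else 0)) (n+1)] at key
    simp only [Finset.sum_add_distrib, Finset.sum_ite_eq', Finset.mem_range] at key
    rw [if_pos (by omega : (0:ℕ) < n + 1), if_pos (by omega : (1:ℕ) < n + 1)] at key
    have hVj : V i 0 = v i ⟨0, h0⟩ := hVnat i 0 h0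
    rw [Pi.smul_apply, smul_eq_mul, ← hVj] at key
    rw [← key]
  -- the normalizing products
  set sp : ℕ → ℝ := fun j => ∏ k ∈ Finset.Icc 1 j, Real.sqrt (β k) with hsp
  have hsppos : ∀ j, 0 < sp j := by
    intro j
    apply Finset.prod_pos
    intro k hk
    exact Real.sqrt_pos.mpr (hβpos k (Finset.mem_Icc.mp hk).1)
  have hsp0 : sp 0 = 1 := by simp [hsp]
  have hspsucc : ∀ j, sp (j+1) = sp j * Real.sqrt (β (j+1)) := by
    intro j
    simp only [hsp]
    rw [Finset.prod_Icc_succ_top (by omega : 1 ≤ j + 1)]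
  -- the fundamental relation between eigenvector entries and π
  have hkey : ∀ (i : Fin (n+1)) (j : ℕ), j ≤ n →
      sp j * V i j = V i 0 * (π j).eval (x i) := by
    intro i
    have hbase0 : sp 0 * V i 0 = V i 0 * (π 0).eval (x i) := by
      rw [hsp0, hπ0]; simp
    have hbase1 : 1 ≤ n → sp 1 * V i 1 = V i 0 * (π 1).eval (x i) := by
      intro h1
      have h0 := hrow0 i
      have hsp1 : sp 1 = Real.sqrt (β 1) := by
        rw [show (1:ℕ) = 0 + 1 from rfl, hspsucc 0, hsp0, one_mul]
      rw [hrec0, hπ0, hsp1]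
      simp only [eval_mul, eval_one, eval_sub, eval_X, eval_C, mul_one]
      linarith [h0]
    have H : ∀ j : ℕ, (j ≤ n → sp j * V i j = V i 0 * (π j).eval (x i)) ∧
        (j + 1 ≤ n → sp (j+1) * V i (j+1) = V i 0 * (π (j+1)).eval (x i)) := by
      intro j
      induction j with
      | zero => exact ⟨fun _ => hbase0, hbase1⟩
      | succ k ihk =>
        refine ⟨ihk.2, ?_⟩
        intro hk2
        have hA := ihk.1 (by omega)
        have hB := ihk.2 (by omega)
        have hrw := hrow i (k+1) (by omega) (by omega)
        rw [if_pos (by omega : k + 1 < n)] at hrw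
        have hnormidx : k + 1 + 1 = k + 2 := rfl
        rw [hnormidx] at hrw
        have hidx2 : k + 1 - 1 = k := rfl
        rw [hidx2] at hrw
        have hrecc := hrec (k+1) (by omega)
        rw [hnormidx, hidx2] at hrecc
        have hsq : Real.sqrt (β (k+1)) * Real.sqrt (β (k+1)) = β (k+1) :=
          Real.mul_self_sqrt (le_of_lt (hβpos (k+1) (by omega)))
        have e1 : sp (k+1) * (Real.sqrt (β (k+2)) * V i (k+2))
            = sp (k+2) * V i (k+2) := by
          rw [show k + 2 = (k+1) + 1 from rfl, hspsucc (k+1)]; ring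
        have e2 : sp (k+1) * (Real.sqrt (β (k+1)) * V i k)
            = β (k+1) * (sp k * V i k) := by
          rw [hspsucc k]; linear_combination (sp k * V i k) * hsq
        have e3 : sp (k+2) * V i (k+2)
            = (x i - α (k+1)) * (sp (k+1) * V i (k+1)) - β (k+1) * (sp k * V i k) := by
          linear_combination (-(sp (k+1))) * hrw - e1 - e2
        rw [show (k+1) + 1 = k + 2 from rfl, e3, hB, hA, hrecc]
        simp only [eval_sub, eval_mul, eval_X, eval_C]
        ring
    intro j hj
    exact (H j).1 hj
  -- first components never vanish
  have hv0 : ∀ i, v i 0 ≠ 0 := by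
    intro i h0
    have hz : ∀ m : Fin (n+1), v i m = 0 := by
      intro m
      have hk := hkey i (m : ℕ) (Nat.lt_succ_iff.mp m.isLt)
      rw [hVv i m, hV0 i, h0, zero_mul] at hk
      have := hsppos (m : ℕ)
      have hvm : v i m = 0 := by
        rcases mul_eq_zero.mp hk with h | h
        · exact absurd h (ne_of_gt this)
        · exact h
      exact hvm
    have h1 := hnorm i
    rw [Finset.sum_eq_zero (fun m _ => by rw [hz m]; ring)] at h1
    exact absurd h1 (by norm_num)
  -- the modified polynomial ω and its roots
  set ω : Polynomial ℝ := (X - C αstar) * π n - C (β n) * π (n-1) with hω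
  have hroot : ∀ i, ω.eval (x i) = 0 := by
    intro i
    have hrn := hrow i n hn le_rfl
    rw [if_neg (lt_irrefl n), hVbig i, mul_zero, add_zero] at hrn
    have hA := hkey i n le_rfl
    have hB := hkey i (n-1) (by omega)
    have hsq : Real.sqrt (β n) * Real.sqrt (β n) = β n :=
      Real.mul_self_sqrt (le_of_lt (hβpos n hn))
    have hspn := hspsucc (n-1)
    rw [show n - 1 + 1 = n by omega] at hspn
    have hzero : V i 0 * ω.eval (x i) = 0 := by
      rw [hω]
      simp only [eval_sub, eval_mul, eval_X, eval_C]
      linear_combination (-(x i - αstar)) * hA + β n * hB + (sp n) * hrn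
        + (Real.sqrt (β n) * V i (n-1)) * hspn
        + (sp (n-1) * V i (n-1)) * hsq
    rw [hV0 i] at hzero
    rcases mul_eq_zero.mp hzero with h | h
    · exact absurd h (hv0 i)
    · exact h
  -- degree and monicity of ω
  have hprod_monic : ((X - C αstar) * π n).Monic := (monic_X_sub_C αstar).mul (hmonic n)
  have hprod_deg : ((X - C αstar) * π n).natDegree = n + 1 := by
    rw [natDegree_mul (X_sub_C_ne_zero αstar) (hmonic n).ne_zero, natDegree_X_sub_C, hdeg]
    omega
  have hsub_deg : (C (β n) * π (n-1)).natDegree < n + 1 := by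
    calc (C (β n) * π (n-1)).natDegree
        ≤ (C (β n)).natDegree + (π (n-1)).natDegree := natDegree_mul_le
      _ = n - 1 := by rw [natDegree_C, hdeg]; omega
      _ < n + 1 := by omega
  have ωmonic : ω.Monic := by
    rw [hω]
    apply hprod_monic.sub_of_left
    have h1 : ((X - C αstar) * π n).degree = ((n+1 : ℕ) : WithBot ℕ) := by
      rw [degree_eq_natDegree hprod_monic.ne_zero, hprod_deg]
    rw [h1]
    calc (C (β n) * π (n-1)).degree
        ≤ ((C (β n) * π (n-1)).natDegree : WithBot ℕ) := degree_le_natDegree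
      _ < ((n+1 : ℕ) : WithBot ℕ) := by exact_mod_cast hsub_deg
  have ωdeg : ω.natDegree = n + 1 := by
    rw [hω, natDegree_sub_eq_left_of_natDegree_lt (by rw [hprod_deg]; exact hsub_deg), hprod_deg]
  have hω0 : ω.eval x0 = 0 := by
    have hstar : x0 - αstar = β n * (π (n-1)).eval x0 / (π n).eval x0 := by
      rw [hαstar]; ring
    rw [hω]
    simp only [eval_sub, eval_mul, eval_X, eval_C]
    rw [hstar]
    field_simp
    ring
  -- column orthonormality of the eigenvector matrix
  have hsymm : J.transpose = J := by
    ext a b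
    rw [Matrix.transpose_apply, hJ, hJ]
    by_cases h1 : (a : ℕ) = (b : ℕ)
    · simp [h1]
    · have h1' : ¬ ((b : ℕ) = (a : ℕ)) := by omega
      by_cases h2 : (a : ℕ) + 1 = (b : ℕ)
      · have h3 : ¬ ((b : ℕ) + 1 = (a : ℕ)) := by omega
        simp [h1, h1', h2, h3]
      · by_cases h3 : (b : ℕ) + 1 = (a : ℕ)
        · simp [h1, h1', h2, h3]
        · simp [h1, h1', h2, h3]
  have horthvec : ∀ a b : Fin (n+1), a ≠ b → ∑ i, v a i * v b i = 0 := by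
    intro a b hab
    have hx : x a ≠ x b := fun h => hab (hxs.injective h)
    have h1 : dotProduct (v a) (J.mulVec (v b))
        = x b * dotProduct (v a) (v b) := by
      rw [heig b, dotProduct_smul, smul_eq_mul]
    have h2 : dotProduct (v a) (J.mulVec (v b))
        = x a * dotProduct (v a) (v b) := by
      rw [Matrix.dotProduct_mulVec]
      have hvm : Matrix.vecMul (v a) J = J.mulVec (v a) := by
        rw [← hsymm, Matrix.vecMul_transpose, hsymm]
      rw [hvm, heig a, smul_dotProduct, smul_eq_mul]
    have h3 : (x a - x b) * dotProduct (v a) (v b) = 0 := by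
      rw [sub_mul, ← h1, ← h2]; ring
    rcases mul_eq_zero.mp h3 with h | h
    · exact absurd (by linarith [sub_eq_zero.mp h] : x a = x b) hx
    · simpa [dotProduct] using h
  have hMMt : (Matrix.of v) * (Matrix.of v).transpose = 1 := by
    ext a b
    rw [Matrix.mul_apply]
    by_cases hab : a = b
    · subst hab
      rw [Matrix.one_apply_eq]
      have := hnorm a
      simpa [sq] using this
    · rw [Matrix.one_apply_ne hab]
      simpa using horthvec a b hab
  have hMtM : (Matrix.of v).transpose * (Matrix.of v) = 1 := mul_eq_one_comm.mp hMMt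
  have col : ∀ a b : Fin (n+1), ∑ i, v i a * v i b = if a = b then 1 else 0 := by
    intro a b
    have h := congrFun (congrFun hMtM a) b
    rw [Matrix.mul_apply] at h
    by_cases hab : a = b
    · subst hab
      rw [Matrix.one_apply_eq] at h
      rw [if_pos rfl]
      simpa using h
    · rw [Matrix.one_apply_ne hab] at h
      rw [if_neg hab]
      simpa using h
  -- the linear functionals
  set L := intLmap μ hint with hLdef
  set S := sumSmap w x with hSdef
  have hLeval : ∀ p : Polynomial ℝ, L p = ∫ t, p.eval t ∂μ := fun p => rfl
  have hSeval : ∀ p : Polynomial ℝ, S p = ∑ i, w i * p.eval (x i) := fun p => rfl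
  have hLprod : ∀ a b : ℕ, a ≠ b → L (π a * π b) = 0 := by
    intro a b hab
    rw [hLeval]
    simp only [eval_mul]
    exact horth a b hab
  have hLπ : ∀ k, k ≤ n → L (π k) = if k = 0 then β 0 else 0 := by
    intro k hk
    by_cases hk0 : k = 0
    · subst hk0
      rw [if_pos rfl, hLeval, hπ0]
      simp only [eval_one]
      exact hβ0.symm
    · rw [if_neg hk0]
      have h := horth k 0 hk0
      rw [hπ0] at h
      simp only [eval_one, mul_one] at h
      rw [hLeval]
      exact h
  have hSπ : ∀ k, k ≤ n → S (π k) = if k = 0 then β 0 else 0 := by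
    intro k hk
    have hklt : k < n + 1 := by omega
    set kf : Fin (n+1) := ⟨k, hklt⟩ with hkf
    have hsummand : ∀ i, w i * (π k).eval (x i) = β 0 * sp k * (v i 0 * v i kf) := by
      intro i
      have h1 := hkey i k (by omega)
      rw [hVnat i k hklt, hV0 i] at h1
      rw [hw i]
      linear_combination (-(β 0 * v i 0)) * h1
    rw [hSeval, Finset.sum_congr rfl (fun i _ => hsummand i), ← Finset.mul_sum, col 0 kf]
    by_cases hk0 : k = 0
    · subst hk0
      rw [if_pos rfl, if_pos (by rw [hkf]; rfl : (0 : Fin (n+1)) = kf), hsp0]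
      ring
    · rw [if_neg hk0, if_neg (by
        intro h
        have : (0 : Fin (n+1)).val = kf.val := by rw [h]
        simp [hkf] at this
        exact hk0 this.symm), mul_zero]
  have hLS : ∀ p ∈ Submodule.span ℝ (π '' Set.Iic n), L p = S p := by
    intro p hp
    have hsub : Submodule.span ℝ (π '' Set.Iic n) ≤ LinearMap.ker (L - S) := by
      rw [Submodule.span_le]
      rintro _ ⟨k, hk, rfl⟩
      rw [SetLike.mem_coe, LinearMap.mem_ker, LinearMap.sub_apply,
        hLπ k hk, hSπ k hk, sub_self]
    have hker := hsub hp
    rw [LinearMap.mem_ker, LinearMap.sub_apply, sub_eq_zero] at hker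
    exact hker
  have hωdecomp : ω = π (n+1) + C (α n - αstar) * π n := by
    have hr := hrec n hn
    rw [hω, hr, C_sub]
    ring
  have hLω : ∀ p ∈ Submodule.span ℝ (π '' Set.Iic (n-1)), L (ω * p) = 0 := by
    intro p hp
    have hsub : Submodule.span ℝ (π '' Set.Iic (n-1))
        ≤ LinearMap.ker (L ∘ₗ LinearMap.mulLeft ℝ ω) := by
      rw [Submodule.span_le]
      rintro _ ⟨k, hk, rfl⟩
      rw [SetLike.mem_coe, LinearMap.mem_ker, LinearMap.comp_apply]
      have hmul : LinearMap.mulLeft ℝ ω (π k) = ω * π k := rfl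
      rw [hmul, hωdecomp]
      have hexp : (π (n+1) + C (α n - αstar) * π n) * π k
          = π (n+1) * π k + (α n - αstar) • (π n * π k) := by
        rw [smul_eq_C_mul]; ring
      rw [hexp, map_add, _root_.map_smul, hLprod (n+1) k (by simp at hk; omega),
        hLprod n k (by simp at hk; omega)]
      simp
    have hker := hsub hp
    rw [LinearMap.mem_ker, LinearMap.comp_apply] at hker
    exact hker
  have hSω : ∀ p : Polynomial ℝ, S (ω * p) = 0 := by
    intro p
    rw [hSeval]
    apply Finset.sum_eq_zero
    intro i _
    rw [eval_mul, hroot i]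
    ring
  constructor
  · -- x0 is a node
    by_contra hno
    push_neg at hno
    have hne : ω ≠ 0 := ωmonic.ne_zero
    have hsub : insert x0 (Finset.image x Finset.univ) ⊆ ω.roots.toFinset := by
      intro y hy
      rw [Multiset.mem_toFinset, mem_roots hne]
      rcases Finset.mem_insert.mp hy with h | h
      · subst h; exact hω0
      · obtain ⟨i, _, rfl⟩ := Finset.mem_image.mp h
        exact hroot i
    have hcard : (insert x0 (Finset.image x Finset.univ)).card = n + 2 := by
      rw [Finset.card_insert_of_notMem (by
        simp only [Finset.mem_image, Finset.mem_univ, true_and, not_exists]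
        exact fun i => fun h => hno i h),
        Finset.card_image_of_injective _ hxs.injective]
      simp
    have h1 : n + 2 ≤ ω.roots.toFinset.card := by
      rw [← hcard]; exact Finset.card_le_card hsub
    have h2 : ω.roots.toFinset.card ≤ n + 1 :=
      le_trans (Multiset.toFinset_card_le _) (le_trans (card_roots' ω) (le_of_eq ωdeg))
    omega
  · -- exactness
    intro f hf
    have fnat : f.natDegree ≤ 2 * n := natDegree_le_iff_degree_le.mpr hf
    have hfd := modByMonic_add_div f ω
    have hrn : (f %ₘ ω).natDegree ≤ n := by
      by_cases h0 : f %ₘ ω = 0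
      · simp [h0]
      · have hlt := degree_modByMonic_lt f ωmonic
        have := natDegree_lt_natDegree h0 hlt
        omega
    have hqn : (f /ₘ ω).natDegree ≤ n - 1 := by
      rw [natDegree_divByMonic f ωmonic, ωdeg]
      omega
    have hqmem := span_aux π hmonic hdeg (n-1) (f /ₘ ω) hqn
    have hrmem := span_aux π hmonic hdeg n (f %ₘ ω) hrn
    calc ∫ t, f.eval t ∂μ = L f := (hLeval f).symm
      _ = L (f %ₘ ω + ω * (f /ₘ ω)) := by rw [hfd]
      _ = L (f %ₘ ω) + L (ω * (f /ₘ ω)) := map_add L _ _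
      _ = S (f %ₘ ω) + 0 := by rw [hLS _ hrmem, hLω _ hqmem]
      _ = S (f %ₘ ω) + S (ω * (f /ₘ ω)) := by rw [hSω (f /ₘ ω)]
      _ = S (f %ₘ ω + ω * (f /ₘ ω)) := (map_add S _ _).symm
      _ = S f := by rw [hfd]
      _ = ∑ i, w i * f.eval (x i) := hSeval f
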